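/- Let n ≥ 1. The second moment of the real equatorial stabilizer ensemble satisfies (1/|ℬₙ|) Σ_{A ∈ ℬₙ} (φ^{req}_A (φ^{req}_A)†)^{⊗2} = (1/4ⁿ) ( I + Σ_{x,y ∈ {0,1}ⁿ} |x y⟩⟨y x| + Σ_{x,y ∈ {0,1}ⁿ} |x x⟩⟨y y| − 2 Σ_{x ∈ {0,1}ⁿ} |x x⟩⟨x x| ), an identity of 4ⁿ×4ⁿ matrices indexed by pairs of bit strings. -/

import Mathlib

open Finset Matrix

/-- Bit strings of length `n`, with entries viewed as `0/1` integers via `Fin 2`. -/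
abbrev Bits (n : ℕ) := Fin n → Fin 2

/-- The index set `ℬₙ`: upper-triangular `n × n` matrices with entries in `{0,1}`
(`a_{ij} = 0` for `i > j`). -/
def Bn (n : ℕ) : Finset (Matrix (Fin n) (Fin n) (Fin 2)) :=
  @Finset.filter _ (fun A => ∀ i j : Fin n, j < i → A i j = 0)
    (fun _ => @Fintype.decidableForallFintype _ _ (fun _ => inferInstance) _) Finset.univ

/-- The quadratic form `xᵀ A x` (its parity is what matters). -/
def quadB {n : ℕ} (A : Matrix (Fin n) (Fin n) (Fin 2)) (x : Bits n) : ℕ :=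
  ∑ i, ∑ j, (A i j : ℕ) * (x i : ℕ) * (x j : ℕ)

/-- The real equatorial stabilizer state `φ^{req}_A`. -/
noncomputable def phiReq {n : ℕ} (A : Matrix (Fin n) (Fin n) (Fin 2)) (x : Bits n) : ℂ :=
  (-1 : ℂ) ^ quadB A x / (Real.sqrt (2 ^ n) : ℂ)

/-- The rank-one projector `φ φ†` onto a vector `φ`. -/
noncomputable def outer {ι : Type*} (φ : ι → ℂ) : Matrix ι ι ℂ :=
  Matrix.of fun x y => φ x * (starRingEnd ℂ) (φ y)

/-- The Kronecker (tensor) square of a matrix, indexed by pairs. -/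
def kron2 {ι : Type*} (M : Matrix ι ι ℂ) : Matrix (ι × ι) (ι × ι) ℂ :=
  Matrix.of fun p q => M p.1 q.1 * M p.2 q.2



def c2 (p : Fin 2) : ZMod 2 := ((p : ℕ) : ZMod 2)

lemma c2_add (p q : Fin 2) : c2 (p + q) = c2 p + c2 q := by revert p q; decide

lemma c2_zero : c2 0 = 0 := by decide

lemma c2_inj (p q : Fin 2) (h : c2 p = c2 q) : p = q := by revert p q; decide

noncomputable def sgn (a : ZMod 2) : ℂ := (-1 : ℂ) ^ a.val

lemma zmod2_cases (a : ZMod 2) : a = 0 ∨ a = 1 := by revert a; decide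

lemma val00 : (0 : ZMod 2).val = 0 := by decide
lemma val11 : (1 : ZMod 2).val = 1 := by decide
lemma two_eq_zero : (1 + 1 : ZMod 2) = 0 := by decide

lemma sgn_zero : sgn 0 = 1 := by simp [sgn, val00]

lemma sgn_add_one (a : ZMod 2) : sgn (a + 1) = - sgn a := by
  rcases zmod2_cases a with h | h <;> subst h <;>
    simp [sgn, val00, val11, zero_add, two_eq_zero]

lemma neg_one_pow_nat (k : ℕ) : (-1 : ℂ) ^ k = sgn (k : ZMod 2) := by
  rw [sgn, ZMod.val_natCast]
  conv_lhs => rw [← Nat.div_add_mod k 2]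
  rw [pow_add, pow_mul]
  norm_num

lemma mem_Bn {n : ℕ} {A : Matrix (Fin n) (Fin n) (Fin 2)} :
    A ∈ Bn n ↔ ∀ i j : Fin n, j < i → A i j = 0 := by
  simp [Bn]

lemma zero_mem_Bn (n : ℕ) : (0 : Matrix (Fin n) (Fin n) (Fin 2)) ∈ Bn n := by
  simp [mem_Bn]

lemma card_Bn_ne_zero (n : ℕ) : ((Bn n).card : ℂ) ≠ 0 := by
  have : (Bn n).Nonempty := ⟨0, zero_mem_Bn n⟩
  exact_mod_cast Nat.cast_ne_zero.mpr (Finset.card_ne_zero_of_mem (zero_mem_Bn n))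

lemma fin2_self_add (p : Fin 2) : p + p = 0 := by revert p; decide

lemma sum_sgn_eq (n : ℕ) (c : Fin n → Fin n → ZMod 2) :
    ∑ A ∈ Bn n, sgn (∑ i, ∑ j, c2 (A i j) * c i j)
      = if (∀ i j : Fin n, i ≤ j → c i j = 0) then ((Bn n).card : ℂ) else 0 := by
  split_ifs with hc
  · rw [Finset.sum_congr rfl (fun A hA => ?_), Finset.sum_const, nsmul_eq_mul, mul_one]
    have h0 : (∑ i, ∑ j, c2 (A i j) * c i j) = 0 := by
      apply Finset.sum_eq_zero; intro i _
      apply Finset.sum_eq_zero; intro j _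
      rcases le_or_gt i j with h | h
      · rw [hc i j h, mul_zero]
      · rw [(mem_Bn.mp hA) i j h, c2_zero, zero_mul]
    rw [h0, sgn_zero]
  · push_neg at hc
    obtain ⟨i₀, j₀, hij, hc1⟩ := hc
    have hc1' : c i₀ j₀ = 1 := (zmod2_cases _).resolve_left hc1
    set E : Matrix (Fin n) (Fin n) (Fin 2) := single i₀ j₀ 1 with hEdef
    have hEapp : ∀ i j, E i j = if i₀ = i ∧ j₀ = j then 1 else 0 := fun i j => rfl
    have hflip : ∀ A, (∑ i, ∑ j, c2 ((A + E) i j) * c i j)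
        = (∑ i, ∑ j, c2 (A i j) * c i j) + 1 := by
      intro A
      have : ∀ i j, c2 ((A + E) i j) * c i j
          = c2 (A i j) * c i j + c2 (E i j) * c i j := by
        intro i j
        rw [Matrix.add_apply, c2_add, add_mul]
      simp_rw [this, Finset.sum_add_distrib]
      congr 1
      have : ∀ i j, c2 (E i j) * c i j = if i₀ = i ∧ j₀ = j then c i j else 0 := by
        intro i j
        rw [hEapp]
        split_ifs with h
        · have : c2 (1 : Fin 2) = 1 := by decide
          rw [this, one_mul]
        · rw [c2_zero, zero_mul]
      simp_rw [this, ite_and]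
      simp [hc1']
    apply Finset.sum_involution (fun A _ => A + E)
    · intro A _
      rw [hflip, sgn_add_one, add_neg_cancel]
    · intro A _ _ hAE
      have h2 := congrFun (congrFun hAE i₀) j₀
      rw [Matrix.add_apply, hEapp, if_pos ⟨rfl, rfl⟩] at h2
      have h3 : ∀ p : Fin 2, ¬ (p + 1 = p) := by decide
      exact h3 _ h2
    · intro A hA
      rw [mem_Bn]
      intro i j hji
      rw [Matrix.add_apply, (mem_Bn.mp hA) i j hji, hEapp]
      rw [if_neg, add_zero]
      rintro ⟨rfl, rfl⟩
      exact absurd hij (not_le.mpr hji)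
    · intro A hA
      ext i j
      rw [Matrix.add_apply, Matrix.add_apply, add_assoc, fin2_self_add, add_zero]

/-- parity of the quadratic form in `ZMod 2`. -/
lemma quad_cast {n : ℕ} (A : Matrix (Fin n) (Fin n) (Fin 2)) (x : Bits n) :
    ((quadB A x : ℕ) : ZMod 2) = ∑ i, ∑ j, c2 (A i j) * (c2 (x i) * c2 (x j)) := by
  unfold quadB
  push_cast
  exact Finset.sum_congr rfl fun i _ => Finset.sum_congr rfl fun j _ => by
    simp only [c2]; ring

/-- the combined coefficient. -/
def cc {n : ℕ} (x y w s : Bits n) (i j : Fin n) : ZMod 2 :=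
  c2 (x i) * c2 (x j) + c2 (y i) * c2 (y j) + c2 (w i) * c2 (w j) + c2 (s i) * c2 (s j)

lemma kron_entry {n : ℕ} (A : Matrix (Fin n) (Fin n) (Fin 2)) (x y w s : Bits n) :
    kron2 (outer (phiReq A)) (x, y) (w, s)
      = ((4 : ℂ) ^ n)⁻¹ * sgn (∑ i, ∑ j, c2 (A i j) * cc x y w s i j) := by
  have hconj : ∀ z : Bits n, (starRingEnd ℂ) (phiReq A z) = phiReq A z := by
    intro z
    unfold phiReq
    rw [map_div₀, map_pow, map_neg, _root_.map_one, Complex.conj_ofReal]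
  have hsq : ((Real.sqrt (2 ^ n) : ℝ) : ℂ) ^ 2 = (2 : ℂ) ^ n := by
    rw [← Complex.ofReal_pow, Real.sq_sqrt (by positivity)]
    push_cast; ring
  have hden : ((Real.sqrt (2 ^ n) : ℝ) : ℂ) ^ 4 = (4 : ℂ) ^ n := by
    have : ((Real.sqrt (2 ^ n) : ℝ) : ℂ) ^ 4 = (((Real.sqrt (2 ^ n) : ℝ) : ℂ) ^ 2) ^ 2 := by ring
    rw [this, hsq, ← pow_mul, mul_comm, pow_mul]
    norm_num
  show (phiReq A x * (starRingEnd ℂ) (phiReq A w)) * (phiReq A y * (starRingEnd ℂ) (phiReq A s))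
      = _
  rw [hconj, hconj]
  unfold phiReq
  rw [div_mul_div_comm, div_mul_div_comm, div_mul_div_comm]
  rw [show ((Real.sqrt (2^n):ℝ):ℂ) * ((Real.sqrt (2^n):ℝ):ℂ) * (((Real.sqrt (2^n):ℝ):ℂ) * ((Real.sqrt (2^n):ℝ):ℂ)) = ((Real.sqrt (2^n):ℝ):ℂ)^4 by ring, hden]
  rw [← pow_add, ← pow_add, ← pow_add, neg_one_pow_nat, div_eq_inv_mul]
  congr 2
  push_cast [quad_cast]
  rw [← Finset.sum_add_distrib, ← Finset.sum_add_distrib, ← Finset.sum_add_distrib]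
  refine Finset.sum_congr rfl fun i _ => ?_
  rw [← Finset.sum_add_distrib, ← Finset.sum_add_distrib, ← Finset.sum_add_distrib]
  refine Finset.sum_congr rfl fun j _ => ?_
  unfold cc
  ring

lemma zmod2_add_self (a : ZMod 2) : a + a = 0 := by revert a; decide

lemma cond_iff {n : ℕ} (x y w s : Bits n) :
    (∀ i j : Fin n, i ≤ j → cc x y w s i j = 0)
      ↔ ((x = w ∧ y = s) ∨ (x = s ∧ y = w) ∨ (x = y ∧ w = s)) := by
  constructor
  · intro h
    -- diagonal relation
    have hdiag : ∀ i, c2 (x i) + c2 (y i) + c2 (w i) + c2 (s i) = 0 := by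
      intro i
      have := h i i le_rfl
      unfold cc at this
      have hsq : ∀ p : Fin 2, c2 p * c2 p = c2 p := by decide
      rwa [hsq, hsq, hsq, hsq] at this
    set a : Fin n → ZMod 2 := fun i => c2 (x i) + c2 (y i) with ha
    set b : Fin n → ZMod 2 := fun i => c2 (x i) + c2 (w i) with hb
    have key : ∀ i j, a i * b j = a j * b i := by
      have main : ∀ u1 v1 w1 s1 u2 v2 w2 s2 : ZMod 2,
          u1 + v1 + w1 + s1 = 0 → u2 + v2 + w2 + s2 = 0 →
          u1 * u2 + v1 * v2 + w1 * w2 + s1 * s2 = 0 →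
          (u1 + v1) * (u2 + w2) = (u2 + v2) * (u1 + w1) := by decide
      intro i j
      rcases lt_trichotomy i j with hij | hij | hij
      · exact main _ _ _ _ _ _ _ _ (hdiag i) (hdiag j) (h i j hij.le)
      · rw [hij]
      · exact (main _ _ _ _ _ _ _ _ (hdiag j) (hdiag i) (h j i hij.le)).symm
    have eq_of : ∀ p q : Fin 2, c2 p + c2 q = 0 → p = q := by decide
    have diag_s : ∀ i, c2 (s i) = c2 (x i) + c2 (y i) + c2 (w i) := by
      intro i
      have h4 : ∀ u v w' s' : ZMod 2, u + v + w' + s' = 0 → s' = u + v + w' := by decide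
      exact h4 _ _ _ _ (hdiag i)
    by_cases hA : ∀ i, a i = 0
    · -- x = y, w = s
      right; right
      have hxy : x = y := funext fun i => eq_of _ _ (hA i)
      refine ⟨hxy, funext fun i => ?_⟩
      apply c2_inj
      rw [diag_s i, hxy]
      have : ∀ u v : ZMod 2, v = u + u + v := by decide
      exact this _ _
    · by_cases hB : ∀ i, b i = 0
      · -- x = w, y = s
        left
        have hxw : x = w := funext fun i => eq_of _ _ (hB i)
        refine ⟨hxw, funext fun i => ?_⟩
        apply c2_inj
        have h5 : ∀ u v w' : ZMod 2, u + w' = 0 → u + v + w' = v := by decide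
        rw [diag_s i]
        exact (h5 _ _ _ (hB i)).symm
      · -- a = b : y = w and x = s
        push_neg at hA hB
        obtain ⟨i₁, hi₁⟩ := hA
        obtain ⟨i₂, hi₂⟩ := hB
        have ha1 : a i₁ = 1 := (zmod2_cases _).resolve_left hi₁
        have hb2 : b i₂ = 1 := (zmod2_cases _).resolve_left hi₂
        have hb1 : b i₁ = 1 := by
          have := key i₂ i₁
          rw [ha1, hb2, one_mul] at this
          have h6 : ∀ u v : ZMod 2, u * v = 1 → v = 1 := by decide
          exact h6 _ _ this
        have hab : ∀ j, a j = b j := by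
          intro j
          have := key i₁ j
          rw [ha1, hb1, one_mul, mul_one] at this
          exact this.symm
        right; left
        have hyw : y = w := by
          refine funext fun i => c2_inj _ _ ?_
          have h7 : ∀ u v w' : ZMod 2, u + v = u + w' → v = w' := by decide
          exact h7 _ _ _ (hab i)
        refine ⟨funext fun i => c2_inj _ _ ?_, hyw⟩
        rw [diag_s i, hyw]
        have : ∀ u v : ZMod 2, u = u + v + v := by decide
        exact this _ _
  · rintro (⟨rfl, rfl⟩ | ⟨rfl, rfl⟩ | ⟨rfl, rfl⟩) <;> intro i j _ <;> unfold cc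
    · have : ∀ p q : ZMod 2, p + q + p + q = 0 := by decide
      exact this _ _
    · have : ∀ p q : ZMod 2, p + q + q + p = 0 := by decide
      exact this _ _
    · have : ∀ p q : ZMod 2, p + p + q + q = 0 := by decide
      exact this _ _

lemma rhs2_entry {n : ℕ} (x y w s : Bits n) :
    (∑ a : Bits n, ∑ b : Bits n, single (a,b) (b,a) (1:ℂ)) (x,y) (w,s)
      = if y = w ∧ x = s then 1 else 0 := by
  simp only [Matrix.sum_apply, single, Matrix.of_apply, Prod.mk.injEq]
  simp only [ite_and]
  rw [Finset.sum_comm]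
  rw [Finset.sum_eq_single y]
  · rw [Finset.sum_eq_single x]
    · simp [and_comm]
    · intro a _ ha; simp [ha]
    · simp
  · intro b _ hb; simp [hb]
  · simp

lemma rhs3_entry {n : ℕ} (x y w s : Bits n) :
    (∑ a : Bits n, ∑ b : Bits n, single (a,a) (b,b) (1:ℂ)) (x,y) (w,s)
      = if x = y ∧ w = s then 1 else 0 := by
  simp only [Matrix.sum_apply, single, Matrix.of_apply, Prod.mk.injEq]
  simp only [ite_and]
  rw [Finset.sum_eq_single x]
  · rw [Finset.sum_eq_single w]
    · by_cases h1 : x = y <;> by_cases h2 : w = s <;> simp [h1, h2]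
    · intro b _ hb; simp [hb]
    · simp
  · intro a _ ha; simp [ha]
  · simp

lemma rhs4_entry {n : ℕ} (x y w s : Bits n) :
    (∑ a : Bits n, single (a,a) (a,a) (1:ℂ)) (x,y) (w,s)
      = if x = y ∧ x = w ∧ x = s then 1 else 0 := by
  simp only [Matrix.sum_apply, single, Matrix.of_apply, Prod.mk.injEq]
  simp only [ite_and]
  rw [Finset.sum_eq_single x]
  · by_cases h1 : x = y <;> by_cases h2 : x = w <;> by_cases h3 : x = s <;>
      simp [h1, h2, h3]
  · intro a _ ha; simp [ha]
  · simp

/-- second moment of the real equatorial stabilizer ensemble. -/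
theorem respovm_second_moment (n : ℕ) (hn : 1 ≤ n) :
    (((Bn n).card : ℂ))⁻¹ • ∑ A ∈ Bn n, kron2 (outer (phiReq A)) =
      ((4 : ℂ) ^ n)⁻¹ •
        ((1 : Matrix (Bits n × Bits n) (Bits n × Bits n) ℂ)
          + (∑ x : Bits n, ∑ y : Bits n, Matrix.single (x, y) (y, x) (1 : ℂ))
          + (∑ x : Bits n, ∑ y : Bits n, Matrix.single (x, x) (y, y) (1 : ℂ))
          - (2 : ℂ) • ∑ x : Bits n, Matrix.single (x, x) (x, x) (1 : ℂ)) := by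
  ext ⟨x, y⟩ ⟨w, s⟩
  rw [Matrix.smul_apply, Matrix.sum_apply]
  simp_rw [kron_entry]
  rw [← Finset.mul_sum, sum_sgn_eq n (cc x y w s)]
  rw [Matrix.smul_apply, Matrix.sub_apply, Matrix.add_apply, Matrix.add_apply,
    Matrix.smul_apply, Matrix.one_apply, rhs2_entry, rhs3_entry, rhs4_entry]
  simp only [cond_iff]
  have hP : (((x, y) : Bits n × Bits n) = (w, s)) ↔ (x = w ∧ y = s) := Prod.ext_iff
  rw [if_congr hP rfl rfl]
  have hcard := card_Bn_ne_zero n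
  by_cases hall : x = y ∧ x = w ∧ x = s
  · obtain ⟨h1, h2, h3⟩ := hall
    subst h1; subst h2; subst h3
    simp only [and_self, eq_self_iff_true, or_self, if_true]
    simp only [smul_eq_mul]
    field_simp
    norm_num
  · have h4 : (if x = y ∧ x = w ∧ x = s then (1:ℂ) else 0) = 0 := if_neg hall
    rw [h4]
    by_cases hD : (x = w ∧ y = s) ∨ (x = s ∧ y = w) ∨ (x = y ∧ w = s)
    · rw [if_pos hD]
      rcases hD with ⟨h1, h2⟩ | ⟨h1, h2⟩ | ⟨h1, h2⟩
      · have nP2 : ¬ (y = w ∧ x = s) := by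
          rintro ⟨rfl, rfl⟩; apply hall; refine ⟨?_, ?_, ?_⟩ <;> simp_all
        have nP3 : ¬ (x = y ∧ w = s) := by
          rintro ⟨rfl, rfl⟩; apply hall; refine ⟨?_, ?_, ?_⟩ <;> simp_all
        rw [if_pos ⟨h1, h2⟩, if_neg nP2, if_neg nP3]
        simp only [smul_eq_mul]
        field_simp
        norm_num
      · have nP1 : ¬ (x = w ∧ y = s) := by
          rintro ⟨rfl, rfl⟩; apply hall; refine ⟨?_, ?_, ?_⟩ <;> simp_all
        have nP3 : ¬ (x = y ∧ w = s) := by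
          rintro ⟨rfl, rfl⟩; apply hall; refine ⟨?_, ?_, ?_⟩ <;> simp_all
        rw [if_neg nP1, if_pos ⟨h2, h1⟩, if_neg nP3]
        simp only [smul_eq_mul]
        field_simp
        norm_num
      · have nP1 : ¬ (x = w ∧ y = s) := by
          rintro ⟨rfl, rfl⟩; apply hall; refine ⟨?_, ?_, ?_⟩ <;> simp_all
        have nP2 : ¬ (y = w ∧ x = s) := by
          rintro ⟨rfl, rfl⟩; apply hall; refine ⟨?_, ?_, ?_⟩ <;> simp_all
        rw [if_neg nP1, if_neg nP2, if_pos ⟨h1, h2⟩]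
        simp only [smul_eq_mul]
        field_simp
        norm_num
    · rw [if_neg hD]
      push_neg at hD
      obtain ⟨nP1, nP2, nP3⟩ := hD
      have nP2' : ¬ (y = w ∧ x = s) := fun ⟨h1, h2⟩ => (nP2 h2) h1
      rw [if_neg (fun h => nP1 h.1 h.2), if_neg nP2', if_neg (fun h => nP3 h.1 h.2)]
      simp
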